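/- arXiv:2401.16289 — 4 statements merged into one kernel-verified Lean document; each statement's English description precedes it below -/
import Mathlib

section
/- The family of all bases of the vector space 𝔽₂^r (i.e., all linearly independent r-element subsets of 𝔽₂^r \ {0}) contains no r-daisy: there do not exist a linearly independent set S = {v₁,…,v_{r−2}} and four further nonzero vectors u₁,u₂,u₃,u₄ (distinct from each other and from the vᵢ) such that for every pair {i,j} ⊆ {1,2,3,4}, the set S ∪ {uᵢ,uⱼ} is linearly independent. -/
/-- A set of vectors is linearly independent (as a set). -/
def IndepSet (K : Type*) {V : Type*} [Field K] [AddCommGroup V] [Module K V]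
    (s : Set V) : Prop :=
  LinearIndependent K (Subtype.val : s → V)

/-- The family of all bases of `𝔽₂^r` (all linearly independent `r`-element subsets of
`𝔽₂^r \ {0}`) contains no `r`-daisy. -/
theorem no_daisy_in_bases (r : ℕ) (hr : 2 ≤ r) :
    ¬ ∃ (S : Finset (Fin r → ZMod 2)) (u : Fin 4 → (Fin r → ZMod 2)),
      S.card = r - 2 ∧
      IndepSet (ZMod 2) (S : Set (Fin r → ZMod 2)) ∧
      (∀ i, u i ≠ 0) ∧
      Function.Injective u ∧
      (∀ i, u i ∉ S) ∧
      (∀ i j : Fin 4, i ≠ j →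
        IndepSet (ZMod 2) ((S : Set (Fin r → ZMod 2)) ∪ {u i, u j})) := by
  rintro ⟨S, u, hcard, hS, hne, hinj, hnotS, hpairs⟩
  classical
  let p : Submodule (ZMod 2) (Fin r → ZMod 2) :=
    Submodule.span (ZMod 2) (S : Set (Fin r → ZMod 2))
  -- key: for i ≠ j, u i ∉ span (S ∪ {u j})
  have key : ∀ i j : Fin 4, i ≠ j →
      u i ∉ Submodule.span (ZMod 2) ((S : Set (Fin r → ZMod 2)) ∪ {u j}) := by
    intro i j hij
    have h := hpairs i j hij
    have hrw : (S : Set (Fin r → ZMod 2)) ∪ {u i, u j}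
        = insert (u i) ((S : Set (Fin r → ZMod 2)) ∪ {u j}) := by
      ext x
      simp only [Set.mem_union, Set.mem_insert_iff, Set.mem_singleton_iff]
      tauto
    rw [IndepSet, hrw] at h
    have hx : u i ∉ (S : Set (Fin r → ZMod 2)) ∪ {u j} := by
      simp only [Set.mem_union, Set.mem_singleton_iff, Finset.mem_coe]
      push_neg
      exact ⟨hnotS i, hinj.ne hij⟩
    exact ((linearIndepOn_id_insert hx).mp h).2
  let Q := (Fin r → ZMod 2) ⧸ p
  let v : Fin 4 → Q := fun i => Submodule.Quotient.mk (u i)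
  have hv0 : ∀ i, v i ≠ 0 := by
    intro i h0
    have hmem : u i ∈ p := (Submodule.Quotient.mk_eq_zero p).1 h0
    have hj : i ≠ (if i = 0 then 1 else 0) := by
      fin_cases i <;> decide
    exact key i _ hj (Submodule.span_mono Set.subset_union_left hmem)
  have hvinj : Function.Injective v := by
    intro i j hij
    by_contra hne'
    apply key i j hne'
    have hsub : u i - u j ∈ p := (Submodule.Quotient.eq p).1 hij
    have h1 : u i - u j ∈
        Submodule.span (ZMod 2) ((S : Set (Fin r → ZMod 2)) ∪ {u j}) :=
      Submodule.span_mono Set.subset_union_left hsub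
    have h2 : u j ∈ Submodule.span (ZMod 2) ((S : Set (Fin r → ZMod 2)) ∪ {u j}) :=
      Submodule.subset_span (by simp)
    have := add_mem h1 h2
    simpa using this
  -- finrank computations
  have h1 := Submodule.finrank_quotient_add_finrank p
  have h2 : Module.finrank (ZMod 2) p = r - 2 := by
    have := finrank_span_finset_eq_card (R := ZMod 2) hS
    rw [hcard] at this
    exact this
  have h3 : Module.finrank (ZMod 2) (Fin r → ZMod 2) = r := Module.finrank_fin_fun _
  have hfr : Module.finrank (ZMod 2) Q = 2 := by
    have : Module.finrank (ZMod 2) Q = Module.finrank (ZMod 2) ((Fin r → ZMod 2) ⧸ p) := rfl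
    omega
  haveI : Finite Q := Quotient.finite _
  haveI : Fintype Q := Fintype.ofFinite Q
  have hcardQ : Fintype.card Q = 4 := by
    rw [Module.card_eq_pow_finrank (K := ZMod 2) (V := Q), hfr, ZMod.card]
    norm_num
  -- extend v by 0 to an injective map Fin 5 → Q
  have hwinj : Function.Injective (Fin.snoc v 0 : Fin 5 → Q) := by
    intro a b hab
    induction a using Fin.lastCases with
    | last =>
      induction b using Fin.lastCases with
      | last => rfl
      | cast b' =>
        simp only [Fin.snoc_last, Fin.snoc_castSucc] at hab
        exact absurd hab.symm (hv0 b')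
    | cast a' =>
      induction b using Fin.lastCases with
      | last =>
        simp only [Fin.snoc_last, Fin.snoc_castSucc] at hab
        exact absurd hab (hv0 a')
      | cast b' =>
        simp only [Fin.snoc_castSucc] at hab
        exact congrArg Fin.castSucc (hvinj hab)
  have hle := Fintype.card_le_of_injective _ hwinj
  rw [hcardQ] at hle
  simp at hle
end

section
/- Let q be a prime power and m ≥ 0, s ≥ 2 with s even, and set t = ⌊s·q^{2m/s + 1}⌋ + 1. Let W be an (r−s)-dimensional subspace of 𝔽_q^{m+r}, and let u₁,…,u_t be t vectors in 𝔽_q^{m+r}. Then there exist s of these vectors, u_{i₁},…,u_{i_s}, whose images in the quotient 𝔽_q^{m+r}/W are linearly dependent. -/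
open Nat Finset

theorem aux_pow_le_choose (k t : ℕ) (hkt : k ≤ t) : t ^ k ≤ k ^ k * t.choose k := by
  have hfac : ∏ i ∈ Finset.range k, (k - i) = Nat.factorial k := by
    rw [← Finset.prod_range_add_one_eq_factorial, ← Finset.prod_range_reflect]
    exact Finset.prod_congr rfl fun i hi => by rw [Finset.mem_range] at hi; omega
  have h1 : t ^ k * Nat.factorial k ≤ k ^ k * t.descFactorial k := by
    calc t ^ k * Nat.factorial k = ∏ i ∈ Finset.range k, (t * (k - i)) := by
          rw [Finset.prod_mul_distrib, Finset.prod_const, Finset.card_range, hfac]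
      _ ≤ ∏ i ∈ Finset.range k, (k * (t - i)) := by
          refine Finset.prod_le_prod' ?_
          intro i hi
          rw [Finset.mem_range] at hi
          obtain ⟨a, rfl⟩ : ∃ a, k = i + a := ⟨k - i, by omega⟩
          obtain ⟨b, rfl⟩ : ∃ b, t = i + b := ⟨t - i, by omega⟩
          have hab : a ≤ b := by omega
          simp only [Nat.add_sub_cancel_left]
          nlinarith
      _ = k ^ k * t.descFactorial k := by
          rw [Finset.prod_mul_distrib, Finset.prod_const, Finset.card_range,
            Nat.descFactorial_eq_prod_range]
  rw [Nat.descFactorial_eq_factorial_mul_choose] at h1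
  have hkf : 0 < Nat.factorial k := Nat.factorial_pos k
  have h2 : t ^ k * Nat.factorial k ≤ (k ^ k * t.choose k) * Nat.factorial k := by
    calc t ^ k * Nat.factorial k ≤ k ^ k * (Nat.factorial k * t.choose k) := h1
      _ = (k ^ k * t.choose k) * Nat.factorial k := by ring
  exact Nat.le_of_mul_le_mul_right h2 hkf

set_option maxHeartbeats 1000000 in
/-- Let `q` be a prime power, `s ≥ 2` even, `t = ⌊s·q^(2m/s+1)⌋ + 1`, and `W` an
`(r-s)`-dimensional subspace of `𝔽_q^(m+r)`. Then among any `t` vectors of `𝔽_q^(m+r)`,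
some `s` of them have linearly dependent images in the quotient `𝔽_q^(m+r)/W`. -/
theorem daisy_quotient_dependent (q m r s t : ℕ) (F : Type*) [Field F] [Fintype F]
    (hF : Fintype.card F = q) (hs : Even s) (hs2 : 2 ≤ s) (hsr : s ≤ r)
    (ht : t = ⌊(s : ℝ) * (q : ℝ) ^ ((2 * m) / (s : ℝ) + 1)⌋₊ + 1)
    (W : Submodule F (Fin (m + r) → F)) (hW : Module.finrank F W = r - s)
    (u : Fin t → (Fin (m + r) → F)) :
    ∃ e : Fin s → Fin t, Function.Injective e ∧
      ¬ LinearIndependent F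
        (fun k : Fin s => Submodule.Quotient.mk (p := W) (u (e k))) := by
  classical
  by_contra hcon
  push_neg at hcon
  obtain ⟨k, hk⟩ := hs
  have hk1 : 1 ≤ k := by omega
  have hq2 : 2 ≤ q := hF ▸ Fintype.one_lt_card
  -- real estimates on t
  set x : ℝ := (q : ℝ) ^ ((2 * (m : ℝ)) / (s : ℝ)) with hxdef
  have hqR : (2 : ℝ) ≤ (q : ℝ) := by exact_mod_cast hq2
  have hqpos : (0 : ℝ) < q := by linarith
  have hx1 : (1 : ℝ) ≤ x := by
    have : (q : ℝ) ^ (0 : ℝ) ≤ (q : ℝ) ^ ((2 * (m : ℝ)) / (s : ℝ)) :=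
      Real.rpow_le_rpow_of_exponent_le (by linarith) (by positivity)
    simpa using this
  have htR : (s : ℝ) * (x * q) < (t : ℝ) := by
    have h0 : (s : ℝ) * (q : ℝ) ^ ((2 * (m : ℝ)) / (s : ℝ) + 1) < (t : ℝ) := by
      rw [ht]
      push_cast
      exact Nat.lt_floor_add_one _
    rwa [Real.rpow_add hqpos, Real.rpow_one] at h0
  have hst : s < t := by
    have hxq : (1 : ℝ) ≤ x * q := by nlinarith
    have hsx : (s : ℝ) ≤ (s : ℝ) * (x * q) := by
      nlinarith [Nat.cast_nonneg (α := ℝ) s]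
    exact_mod_cast hsx.trans_lt htR
  have hkt : k ≤ t := by omega
  -- dimension and cardinality of the quotient
  have hfd : FiniteDimensional F (Fin (m + r) → F) := by infer_instance
  have hdim : Module.finrank F ((Fin (m + r) → F) ⧸ W) = m + s := by
    have h1 := Submodule.finrank_quotient_add_finrank W
    have h2 : Module.finrank F (Fin (m + r) → F) = m + r := by
      rw [Module.finrank_pi, Fintype.card_fin]
    omega
  have hfinQ : Finite ((Fin (m + r) → F) ⧸ W) := Quotient.finite _
  have fQ : Fintype ((Fin (m + r) → F) ⧸ W) := Fintype.ofFinite _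
  have hcardQ : Fintype.card ((Fin (m + r) → F) ⧸ W) = q ^ (m + s) := by
    rw [Module.card_eq_pow_finrank (K := F), hF, hdim]
  set v : Fin t → ((Fin (m + r) → F) ⧸ W) := fun i => Submodule.Quotient.mk (p := W) (u i)
    with hvdef
  -- key: small-support coefficient vectors annihilating the v's must vanish
  have key : ∀ d : Fin t → F, (∑ i, d i • v i = 0) →
      (Finset.univ.filter (fun i => d i ≠ 0)).card ≤ s → ∀ i, d i = 0 := by
    intro d hsum hcard
    obtain ⟨T, hST, -, hT⟩ := Finset.exists_subsuperset_card_eq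
      (Finset.subset_univ (Finset.univ.filter (fun i => d i ≠ 0))) hcard
      (by simpa using hst.le)
    set e : Fin s → Fin t := fun j => (T.orderIsoOfFin hT j : Fin t) with hedef
    have he : Function.Injective e := fun a b hab =>
      (T.orderIsoOfFin hT).injective (Subtype.ext hab)
    have hrange : ∀ i ∈ T, ∃ j, e j = i := fun i hi =>
      ⟨(T.orderIsoOfFin hT).symm ⟨i, hi⟩, by
        simp [hedef, ← Finset.coe_orderIsoOfFin_apply]⟩
    have hmem : ∀ i, d i ≠ 0 → i ∈ Finset.univ.image e := by
      intro i hdi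
      have hiT : i ∈ T := hST (Finset.mem_filter.mpr ⟨Finset.mem_univ _, hdi⟩)
      obtain ⟨j, rfl⟩ := hrange i hiT
      exact Finset.mem_image.mpr ⟨j, Finset.mem_univ _, rfl⟩
    have hsum2 : ∑ j : Fin s, d (e j) • v (e j) = 0 := by
      have h1 : ∑ i ∈ Finset.univ.image e, d i • v i = ∑ j : Fin s, d (e j) • v (e j) :=
        Finset.sum_image (fun a _ b _ hab => he hab)
      rw [← h1, Finset.sum_subset (Finset.subset_univ _) ?_]
      · exact hsum
      · intro i _ hi
        have : d i = 0 := by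
          by_contra hdi
          exact hi (hmem i hdi)
        simp [this]
    have hz := Fintype.linearIndependent_iff.mp (hcon e he) (fun j => d (e j)) hsum2
    intro i
    by_contra hdi
    obtain ⟨j, -, rfl⟩ := Finset.mem_image.mp (hmem i hdi)
    exact hdi (hz j)
  -- injection from (subset, unit coefficients) pairs into the quotient
  set f : (Σ _ : Finset (Fin t), (Fin t → Fˣ)) → ((Fin (m + r) → F) ⧸ W) :=
    fun p => ∑ i ∈ p.1, (p.2 i : F) • v i with hfdef
  set D : Finset (Σ _ : Finset (Fin t), (Fin t → Fˣ)) :=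
    (Finset.univ.powersetCard k).sigma
      (fun A => Fintype.piFinset (fun i => if i ∈ A then Finset.univ else {1})) with hDdef
  have hsumA : ∀ (A : Finset (Fin t)) (c : Fin t → Fˣ),
      ∑ i, (if i ∈ A then (c i : F) else 0) • v i = f ⟨A, c⟩ := by
    intro A c
    calc ∑ i, (if i ∈ A then (c i : F) else 0) • v i
        = ∑ i, (if i ∈ A then (c i : F) • v i else 0) := by
          refine Finset.sum_congr rfl fun i _ => ?_
          by_cases hiA : i ∈ A <;> simp [hiA]
      _ = ∑ i ∈ Finset.univ ∩ A, (c i : F) • v i := Finset.sum_ite_mem _ _ _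
      _ = f ⟨A, c⟩ := by rw [Finset.univ_inter]
  have hinj : Set.InjOn f D := by
    rintro ⟨A, c⟩ hA ⟨B, c'⟩ hB hfeq
    simp only [hDdef, Finset.mem_coe, Finset.mem_sigma, Finset.mem_powersetCard_univ,
      Fintype.mem_piFinset] at hA hB
    set d : Fin t → F := fun i =>
      (if i ∈ A then (c i : F) else 0) - (if i ∈ B then (c' i : F) else 0) with hddef
    have hdsum : ∑ i, d i • v i = 0 := by
      simp only [hddef, sub_smul, Finset.sum_sub_distrib, hsumA]
      exact sub_eq_zero.mpr hfeq
    have hdcard : (Finset.univ.filter (fun i => d i ≠ 0)).card ≤ s := by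
      have hsub : Finset.univ.filter (fun i => d i ≠ 0) ⊆ A ∪ B := by
        intro i hi
        rw [Finset.mem_filter] at hi
        by_contra hiAB
        rw [Finset.mem_union] at hiAB
        push_neg at hiAB
        exact hi.2 (by simp [hddef, hiAB.1, hiAB.2])
      calc (Finset.univ.filter (fun i => d i ≠ 0)).card
          ≤ (A ∪ B).card := Finset.card_le_card hsub
        _ ≤ A.card + B.card := Finset.card_union_le _ _
        _ ≤ s := by omega
    have hd0 := key d hdsum hdcard
    have hite : ∀ i, (if i ∈ A then (c i : F) else 0) = (if i ∈ B then (c' i : F) else 0) := by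
      intro i
      have h := hd0 i
      rw [hddef] at h
      exact sub_eq_zero.mp h
    have hAB : A = B := by
      ext i
      constructor
      · intro hiA
        by_contra hiB
        have h := hite i
        rw [if_pos hiA, if_neg hiB] at h
        exact Units.ne_zero (c i) h
      · intro hiB
        by_contra hiA
        have h := hite i
        rw [if_neg hiA, if_pos hiB] at h
        exact Units.ne_zero (c' i) h.symm
    subst hAB
    have hc : c = c' := by
      funext i
      by_cases hiA : i ∈ A
      · have h := hite i
        rw [if_pos hiA, if_pos hiA] at h
        exact Units.ext h
      · have h1 := hA.2 i
        have h2 := hB.2 i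
        rw [if_neg hiA, Finset.mem_singleton] at h1 h2
        rw [h1, h2]
    rw [hc]
  -- counting
  have hq1 : 1 ≤ q := by omega
  have hD : D.card = t.choose k * (q - 1) ^ k := by
    rw [hDdef, Finset.card_sigma]
    have hterm : ∀ A ∈ (Finset.univ : Finset (Fin t)).powersetCard k,
        (Fintype.piFinset
          (fun i => if i ∈ A then (Finset.univ : Finset Fˣ) else {1})).card = (q - 1) ^ k := by
      intro A hA
      rw [Finset.mem_powersetCard_univ] at hA
      rw [Fintype.card_piFinset]
      calc ∏ i, (if i ∈ A then (Finset.univ : Finset Fˣ) else {1}).card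
          = ∏ i, (if i ∈ A then (q - 1) else 1) := by
            refine Finset.prod_congr rfl fun i _ => ?_
            by_cases hiA : i ∈ A
            · rw [if_pos hiA, if_pos hiA, Finset.card_univ, Fintype.card_units, hF]
            · rw [if_neg hiA, if_neg hiA, Finset.card_singleton]
        _ = (q - 1) ^ k := by
            rw [Finset.prod_ite_mem, Finset.univ_inter, Finset.prod_const, hA]
    rw [Finset.sum_congr rfl hterm, Finset.sum_const, Finset.card_powersetCard,
      Finset.card_univ, Fintype.card_fin, smul_eq_mul]
  have hmain : t.choose k * (q - 1) ^ k ≤ q ^ (m + s) := by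
    have h1 : D.card ≤ (Finset.univ : Finset ((Fin (m + r) → F) ⧸ W)).card :=
      Finset.card_le_card_of_injOn f (fun p _ => Finset.mem_univ _) hinj
    rwa [hD, Finset.card_univ, hcardQ] at h1
  have hnat : t ^ k * (q - 1) ^ k ≤ k ^ k * q ^ (m + s) :=
    calc t ^ k * (q - 1) ^ k ≤ (k ^ k * t.choose k) * (q - 1) ^ k :=
          Nat.mul_le_mul_right _ (aux_pow_le_choose k t hkt)
      _ = k ^ k * (t.choose k * (q - 1) ^ k) := by ring
      _ ≤ k ^ k * q ^ (m + s) := Nat.mul_le_mul_left _ hmain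
  -- final real contradiction
  have hR : ((t : ℝ) * ((q : ℝ) - 1)) ^ k ≤ (k : ℝ) ^ k * (q : ℝ) ^ (m + s) := by
    have hcast : ((q : ℝ) - 1) = ((q - 1 : ℕ) : ℝ) := by
      rw [Nat.cast_sub hq1, Nat.cast_one]
    rw [mul_pow, hcast]
    exact_mod_cast hnat
  have hk0 : (k : ℝ) ≠ 0 := Nat.cast_ne_zero.mpr (by omega)
  have hxpos : (0 : ℝ) < x := by linarith
  have hsR : (s : ℝ) = 2 * k := by rw [hk]; push_cast; ring
  have hxk : x ^ k = (q : ℝ) ^ m := by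
    rw [hxdef, ← Real.rpow_natCast ((q : ℝ) ^ (2 * (m : ℝ) / (s : ℝ))) k,
      ← Real.rpow_mul (le_of_lt hqpos)]
    have hexp : (2 * (m : ℝ) / (s : ℝ)) * k = m := by
      rw [hsR]
      field_simp
    rw [hexp, Real.rpow_natCast]
  have hgt : (k : ℝ) ^ k * (q : ℝ) ^ (m + s) < ((t : ℝ) * ((q : ℝ) - 1)) ^ k := by
    have htR' : 2 * (k : ℝ) * (x * q) < t := by
      rw [hsR] at htR
      linarith
    have h1 : (k : ℝ) * x * (q : ℝ) ^ 2 < (t : ℝ) * ((q : ℝ) - 1) := by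
      have h2 : (2 * (k : ℝ) * (x * q)) * (q / 2) < (t : ℝ) * (q / 2) :=
        mul_lt_mul_of_pos_right htR' (by positivity)
      have h3 : (t : ℝ) * (q / 2) ≤ (t : ℝ) * ((q : ℝ) - 1) := by
        have ht0 : (0 : ℝ) ≤ t := Nat.cast_nonneg t
        nlinarith
      nlinarith
    calc (k : ℝ) ^ k * (q : ℝ) ^ (m + s)
        = ((k : ℝ) * x * (q : ℝ) ^ 2) ^ k := by
          rw [hk, show m + (k + k) = m + 2 * k by ring, pow_add, pow_mul,
            mul_pow, mul_pow, hxk]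
          ring
      _ < ((t : ℝ) * ((q : ℝ) - 1)) ^ k :=
          pow_lt_pow_left₀ h1 (by positivity) (by omega)
  linarith
end

section
/- Let ℱ be a 𝒟_r-free r-uniform hypergraph on vertex set [N] (containing no r-daisy), and let the blow-up 𝒢 on vertex set [n], n a multiple of N with classes C₁,…,C_N of size n/N, consist of all r-sets {x₁,…,x_r} with xᵢ ∈ C_{jᵢ} for distinct j₁,…,j_r with {j₁,…,j_r} ∈ ℱ. Then 𝒢 is 𝒟_r-free. -/
/-- A family `F` of finite sets contains an `r`-daisy if there are an `(r-2)`-set `S`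
(the stem) and a disjoint `4`-set `T` such that `S ∪ X ∈ F` for every 2-subset `X` of
`T`. -/
def ContainsDaisy {α : Type*} [DecidableEq α] (r : ℕ) (F : Finset (Finset α)) : Prop :=
  ∃ S T : Finset α, S.card = r - 2 ∧ T.card = 4 ∧ Disjoint S T ∧
    ∀ X ⊆ T, X.card = 2 → S ∪ X ∈ F

/-- The blow-up of a daisy-free `r`-uniform hypergraph is daisy-free. Here `c` assigns to
each of the `n = N·M` vertices its class (all classes of size `M = n / N`), and the
blow-up `G` consists of the `r`-sets whose vertices lie in `r` distinct classes whose set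
of indices forms an edge of `F`. -/
theorem blowup_daisy_free (r N n M : ℕ) (hr : 2 ≤ r) (hn : n = N * M)
    (c : Fin n → Fin N)
    (hclass : ∀ j : Fin N, (Finset.univ.filter (fun x => c x = j)).card = n / N)
    (F : Finset (Finset (Fin N))) (hunif : ∀ e ∈ F, e.card = r)
    (hF : ¬ ContainsDaisy r F)
    (G : Finset (Finset (Fin n)))
    (hG : ∀ A : Finset (Fin n),
      A ∈ G ↔ A.card = r ∧ Set.InjOn c (A : Set (Fin n)) ∧ A.image c ∈ F) :
    ¬ ContainsDaisy r G := by
  rintro ⟨S, T, hS, hT, hdisj, hmem⟩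
  apply hF
  -- `c` is injective on `S ∪ T`
  have hinj : Set.InjOn c ((S ∪ T : Finset (Fin n)) : Set (Fin n)) := by
    intro a ha b hb hab
    have hsub : ({a, b} : Finset (Fin n)) ∩ T ⊆ T := Finset.inter_subset_right
    have hcard : (({a, b} : Finset (Fin n)) ∩ T).card ≤ 2 := by
      calc (({a, b} : Finset (Fin n)) ∩ T).card ≤ ({a, b} : Finset (Fin n)).card :=
            Finset.card_le_card Finset.inter_subset_left
        _ ≤ 2 := Finset.card_insert_le _ _ |>.trans (by simp)
    obtain ⟨X, hX1, hX2, hX3⟩ := Finset.exists_subsuperset_card_eq hsub hcard (by omega)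
    have hXG : S ∪ X ∈ G := hmem X hX2 hX3
    have hinjX := ((hG _).mp hXG).2.1
    have key : ∀ x : Fin n, x ∈ S ∪ T → x ∈ ({a, b} : Finset (Fin n)) → x ∈ S ∪ X := by
      intro x hx hxab
      rcases Finset.mem_union.mp hx with h | h
      · exact Finset.mem_union_left _ h
      · exact Finset.mem_union_right _ (hX1 (Finset.mem_inter.mpr ⟨hxab, h⟩))
    have ha' : a ∈ S ∪ X := key a (by exact_mod_cast ha) (by simp)
    have hb' : b ∈ S ∪ X := key b (by exact_mod_cast hb) (by simp)
    exact hinjX (by exact_mod_cast ha') (by exact_mod_cast hb') hab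
  have hinjS : Set.InjOn c (S : Set (Fin n)) :=
    hinj.mono (by exact_mod_cast Finset.subset_union_left)
  have hinjT : Set.InjOn c (T : Set (Fin n)) :=
    hinj.mono (by exact_mod_cast Finset.subset_union_right)
  refine ⟨S.image c, T.image c, ?_, ?_, ?_, ?_⟩
  · rw [Finset.card_image_of_injOn hinjS, hS]
  · rw [Finset.card_image_of_injOn hinjT, hT]
  · rw [Finset.disjoint_left]
    rintro j hjS hjT
    obtain ⟨s, hs, rfl⟩ := Finset.mem_image.mp hjS
    obtain ⟨t, ht, hct⟩ := Finset.mem_image.mp hjT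
    have : t = s := hinj (by simp [ht]) (by simp [hs]) hct
    subst this
    exact Finset.disjoint_left.mp hdisj hs ht
  · intro X' hX' hX'card
    obtain ⟨X, hXT, rfl⟩ := Finset.subset_image_iff.mp hX'
    have hXcard : X.card = 2 := by
      rwa [Finset.card_image_of_injOn (hinjT.mono (by exact_mod_cast hXT))] at hX'card
    have hXG : S ∪ X ∈ G := hmem X hXT hXcard
    have := ((hG _).mp hXG).2.2
    rwa [Finset.image_union] at this
end

section
/- If ℱ ⊆ {0,1}^{d+2} intersects the vertex set of every d-dimensional subcube of {0,1}^{d+2}, then ℱ separates pairs: for all 1 ≤ i < j ≤ d+2 there exists x ∈ ℱ with x_i ≠ x_j. Consequently |ℱ| ≥ log₂(d+2). -/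
/-- If `F ⊆ {0,1}^(d+2)` meets the vertex set of every `d`-dimensional subcube, then `F`
separates pairs of coordinates, and consequently `|F| ≥ log₂(d+2)`. -/
theorem transversal_separates_pairs (d : ℕ) (F : Finset (Fin (d + 2) → Bool))
    (hmeet : ∀ I : Finset (Fin (d + 2)), I.card = 2 → ∀ c : Fin (d + 2) → Bool,
      ∃ x ∈ F, ∀ i ∈ I, x i = c i) :
    (∀ i j : Fin (d + 2), i ≠ j → ∃ x ∈ F, x i ≠ x j) ∧
    Real.logb 2 (d + 2) ≤ (F.card : ℝ) := by
  have hsep : ∀ i j : Fin (d + 2), i ≠ j → ∃ x ∈ F, x i ≠ x j := by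
    intro i j hij
    obtain ⟨x, hxF, hx⟩ := hmeet {i, j} (by rw [Finset.card_insert_of_notMem (by simpa),
      Finset.card_singleton]) (fun k => decide (k = i))
    refine ⟨x, hxF, ?_⟩
    have hi := hx i (by simp)
    have hj := hx j (by simp)
    simp only [decide_eq_true_eq] at hi hj
    rw [hi, hj]
    simp [hij.symm]
  refine ⟨hsep, ?_⟩
  have hinj : Function.Injective (fun i : Fin (d + 2) => fun x : F => (x : Fin (d + 2) → Bool) i) := by
    intro i j h
    by_contra hij
    obtain ⟨x, hxF, hx⟩ := hsep i j hij
    exact hx (congrFun h ⟨x, hxF⟩)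
  have hcard : d + 2 ≤ 2 ^ F.card := by
    have := Fintype.card_le_of_injective _ hinj
    simpa [Fintype.card_fun] using this
  have h2 : ((d : ℝ) + 2) ≤ (2 : ℝ) ^ (F.card : ℕ) := by
    exact_mod_cast hcard
  calc Real.logb 2 (d + 2) ≤ Real.logb 2 ((2 : ℝ) ^ (F.card : ℕ)) := by
        apply Real.logb_le_logb_of_le (by norm_num) (by positivity) h2
    _ = F.card := by
        rw [Real.logb_pow]
        simp [Real.logb_self_eq_one]
end
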